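/- Let Σ̃ and Σ be p×p symmetric PSD matrices and λ > 0 with λ ≥ 2‖Σ̃ − Σ‖_∞. Let Σ̂ = argmin_{S ∈ 𝒮_p} ‖Σ̃ − S‖₂² + λ‖S‖₁. Then ‖Σ̂ − Σ‖_∞ ≤ λ. -/

import Mathlib

open Matrix

/-- Operator (spectral) norm of a real square matrix, via its action on Euclidean space. -/
noncomputable def opN {p : ℕ} (A : Matrix (Fin p) (Fin p) ℝ) : ℝ :=
  ‖Matrix.toEuclideanCLM (𝕜 := ℝ) A‖

/-- Squared Frobenius norm. -/
def frobSq {p : ℕ} (M : Matrix (Fin p) (Fin p) ℝ) : ℝ := (Mᵀ * M).trace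

/-- Nuclear norm (sum of singular values) of a real square matrix: trace of √(AᵀA). -/
noncomputable def nucN {p : ℕ} (A : Matrix (Fin p) (Fin p) ℝ) : ℝ :=
  ((Matrix.posSemidef_conjTranspose_mul_self A).1.eigenvectorUnitary.1 *
    diagonal ((RCLike.ofReal : ℝ → ℝ) ∘ (Real.sqrt ·) ∘ (Matrix.posSemidef_conjTranspose_mul_self A).1.eigenvalues) *
    (star (Matrix.posSemidef_conjTranspose_mul_self A).1.eigenvectorUnitary :
      Matrix (Fin p) (Fin p) ℝ)).trace

section SqrtPort
open scoped MatrixOrder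

noncomputable def Matrix.PosSemidef.sqrt {p : ℕ} {A : Matrix (Fin p) (Fin p) ℝ}
    (hA : A.PosSemidef) : Matrix (Fin p) (Fin p) ℝ :=
  hA.1.eigenvectorUnitary.1 *
    diagonal ((RCLike.ofReal : ℝ → ℝ) ∘ (Real.sqrt ·) ∘ hA.1.eigenvalues) *
    (star hA.1.eigenvectorUnitary : Matrix (Fin p) (Fin p) ℝ)

lemma Matrix.PosSemidef.sqrt_eq_cfcSqrt {p : ℕ} {A : Matrix (Fin p) (Fin p) ℝ}
    (hA : A.PosSemidef) : hA.sqrt = CFC.sqrt A := by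
  rw [CFC.sqrt_eq_cfc, cfc_nnreal_eq_real _ A hA.nonneg, hA.1.cfc_eq]
  simp only [Matrix.PosSemidef.sqrt, IsHermitian.cfc, Unitary.conjStarAlgAut_apply]
  unfold Real.sqrt
  rfl

lemma Matrix.PosSemidef.posSemidef_sqrt {p : ℕ} {A : Matrix (Fin p) (Fin p) ℝ}
    (hA : A.PosSemidef) : hA.sqrt.PosSemidef := by
  rw [hA.sqrt_eq_cfcSqrt]
  exact Matrix.nonneg_iff_posSemidef.mp (CFC.sqrt_nonneg A)

lemma Matrix.PosSemidef.sqrt_mul_self {p : ℕ} {A : Matrix (Fin p) (Fin p) ℝ}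
    (hA : A.PosSemidef) : hA.sqrt * hA.sqrt = A := by
  rw [hA.sqrt_eq_cfcSqrt]
  exact CFC.sqrt_mul_sqrt_self A hA.nonneg

lemma Matrix.PosSemidef.eq_sqrt_of_sq_eq {p : ℕ} {A B : Matrix (Fin p) (Fin p) ℝ}
    (hA : A.PosSemidef) (hB : B.PosSemidef) (h : A ^ 2 = B) : A = hB.sqrt := by
  rw [hB.sqrt_eq_cfcSqrt, ← h, sq, CFC.sqrt_mul_self A hA.nonneg]

end SqrtPort

section Aux
variable {p : ℕ}

local notation "Mat" => Matrix (Fin p) (Fin p) ℝ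

lemma real_psd_iff {A : Mat} :
    A.PosSemidef ↔ Aᵀ = A ∧ ∀ x, 0 ≤ x ⬝ᵥ A *ᵥ x := by
  rw [posSemidef_iff_dotProduct_mulVec]
  constructor
  · rintro ⟨h1, h2⟩
    refine ⟨?_, fun x => by simpa using h2 x⟩
    rw [← conjTranspose_eq_transpose_of_trivial]; exact h1
  · rintro ⟨h1, h2⟩
    exact ⟨by rwa [IsHermitian, conjTranspose_eq_transpose_of_trivial],
      fun x => by simpa using h2 x⟩

lemma psd_smul {A : Mat} (hA : A.PosSemidef) {c : ℝ} (hc : 0 ≤ c) : (c • A).PosSemidef := by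
  rw [real_psd_iff] at hA ⊢
  refine ⟨by rw [transpose_smul, hA.1], fun x => ?_⟩
  rw [smul_mulVec, dotProduct_smul, smul_eq_mul]
  exact mul_nonneg hc (hA.2 x)

lemma frobSq_eq_sum (M : Mat) : frobSq M = ∑ i, ∑ j, (M j i) ^ 2 := by
  simp [frobSq, Matrix.trace, Matrix.diag, Matrix.mul_apply, sq]

lemma frobSq_nonneg (M : Mat) : 0 ≤ frobSq M := by
  rw [frobSq_eq_sum]
  positivity

lemma frobSq_eq_zero {M : Mat} (h : frobSq M = 0) : M = 0 := by
  rw [frobSq_eq_sum] at h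
  ext i j
  have h1 : ∀ a ∈ Finset.univ, (0:ℝ) ≤ ∑ b, (M b a) ^ 2 := fun a _ => by positivity
  have h2 := (Finset.sum_eq_zero_iff_of_nonneg h1).mp h j (Finset.mem_univ j)
  have h3 : ∀ b ∈ Finset.univ, (0:ℝ) ≤ (M b j) ^ 2 := fun b _ => sq_nonneg _
  have h4 := (Finset.sum_eq_zero_iff_of_nonneg h3).mp h2 i (Finset.mem_univ i)
  simpa using pow_eq_zero_iff (n := 2) (by norm_num) |>.mp h4

lemma frob_expand (X Y : Mat) (t : ℝ) :
    frobSq (X - t • Y) = frobSq X - 2 * t * (Xᵀ * Y).trace + t ^ 2 * frobSq Y := by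
  have h : (Yᵀ * X).trace = (Xᵀ * Y).trace := by
    rw [← Matrix.trace_transpose (Yᵀ * X), Matrix.transpose_mul, Matrix.transpose_transpose]
  simp only [frobSq, Matrix.transpose_sub, Matrix.transpose_smul, Matrix.sub_mul,
    Matrix.mul_sub, Matrix.smul_mul, Matrix.mul_smul, Matrix.trace_sub, Matrix.trace_smul,
    smul_smul, smul_eq_mul, h]
  ring

lemma nucN_psd {A : Mat} (hA : A.PosSemidef) : nucN A = A.trace := by
  have h : A = (Matrix.posSemidef_conjTranspose_mul_self A).sqrt :=
    hA.eq_sqrt_of_sq_eq _ (by rw [pow_two, hA.1.eq])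
  change (Matrix.posSemidef_conjTranspose_mul_self A).sqrt.trace = _; rw [← h]

lemma trace_vecMulVec (x : Fin p → ℝ) : (vecMulVec x x).trace = x ⬝ᵥ x := by
  simp [Matrix.trace, Matrix.diag, vecMulVec_apply, dotProduct]

lemma trace_transpose_mul_vecMulVec (A : Mat) (x : Fin p → ℝ) :
    (Aᵀ * vecMulVec x x).trace = x ⬝ᵥ A *ᵥ x := by
  simp only [Matrix.trace, Matrix.diag, Matrix.mul_apply, vecMulVec_apply,
    Matrix.transpose_apply, dotProduct, Matrix.mulVec, Finset.mul_sum]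
  rw [Finset.sum_comm]
  refine Finset.sum_congr rfl fun j _ => Finset.sum_congr rfl fun i _ => by ring

lemma psd_vecMulVec (x : Fin p → ℝ) : (vecMulVec x x).PosSemidef := by
  rw [real_psd_iff]
  constructor
  · ext i j; simp [vecMulVec_apply, Matrix.transpose_apply, mul_comm]
  · intro y
    have : y ⬝ᵥ (vecMulVec x x) *ᵥ y = (x ⬝ᵥ y) ^ 2 := by
      simp only [dotProduct, Matrix.mulVec, vecMulVec_apply, Finset.mul_sum, sq,
        Finset.sum_mul, dotProduct]
      rw [Finset.sum_comm]
      refine Finset.sum_congr rfl fun j _ => Finset.sum_congr rfl fun i _ => by ring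
    rw [this]; exact sq_nonneg _

lemma nonneg_of_forall_quad {a b : ℝ} (hb : 0 ≤ b)
    (h : ∀ t : ℝ, 0 < t → t < 1 → 0 ≤ a * t + b * t ^ 2) : 0 ≤ a := by
  by_contra ha
  push_neg at ha
  set t := -a / ((b + 1) * (1 - a)) with htdef
  have h1 : (0:ℝ) < 1 - a := by linarith
  have h2 : (0:ℝ) < (b + 1) * (1 - a) := by positivity
  have ha' : 0 < -a := by linarith
  have ht0 : 0 < t := by positivity
  have ht1 : t < 1 := by
    rw [htdef, div_lt_one h2]; nlinarith
  have h3 := h t ht0 ht1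
  have h4 : b * t < -a := by
    rw [htdef, mul_div_assoc'] at *
    rw [div_lt_iff₀ h2]
    have h5 : 0 < 1 - a * b - a := by nlinarith [mul_nonneg hb ha'.le]
    nlinarith [mul_pos ha' h5]
  nlinarith

lemma sym_dot {A : Mat} (hA : Aᵀ = A) (x y : Fin p → ℝ) :
    x ⬝ᵥ A *ᵥ y = (A *ᵥ x) ⬝ᵥ y := by
  rw [dotProduct_mulVec, ← Matrix.mulVec_transpose, hA]

end Aux
lemma opN_le_of_psd {p : ℕ} {B : Matrix (Fin p) (Fin p) ℝ} {c : ℝ} (hc : 0 ≤ c)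
    (hB : B.PosSemidef) (hcB : ((c • (1 : Matrix (Fin p) (Fin p) ℝ)) - B).PosSemidef) :
    opN B ≤ c := by
  rw [opN]
  refine ContinuousLinearMap.opNorm_le_bound _ hc fun x => ?_
  set v : Fin p → ℝ := WithLp.equiv 2 _ x with hv
  have hq : ∀ z : Fin p → ℝ, z ⬝ᵥ B *ᵥ z ≤ c * (z ⬝ᵥ z) := by
    intro z
    have h := (real_psd_iff.mp hcB).2 z
    rw [Matrix.sub_mulVec, dotProduct_sub, smul_mulVec, Matrix.one_mulVec,
      dotProduct_smul, smul_eq_mul] at h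
    linarith
  set R := hB.sqrt with hR
  have hRt : Rᵀ = R := by
    rw [← conjTranspose_eq_transpose_of_trivial]; exact hB.posSemidef_sqrt.1
  have hRR : R * R = B := hB.sqrt_mul_self
  have key : ∀ z : Fin p → ℝ, (R *ᵥ z) ⬝ᵥ (R *ᵥ z) = z ⬝ᵥ B *ᵥ z := by
    intro z
    rw [sym_dot hRt, Matrix.mulVec_mulVec, hRR]
    exact dotProduct_comm _ _
  have hnorm : ∀ y : EuclideanSpace ℝ (Fin p),
      ‖y‖ ^ 2 = (WithLp.equiv 2 _ y) ⬝ᵥ (WithLp.equiv 2 _ y) := by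
    intro y
    rw [← real_inner_self_eq_norm_sq, EuclideanSpace.inner_eq_star_dotProduct]
    simp [dotProduct]
  have hCLM : WithLp.equiv 2 _ ((Matrix.toEuclideanCLM (𝕜 := ℝ) B) x) = B *ᵥ v := by
    exact Matrix.ofLp_toEuclideanCLM B x
  have h1 : ‖(Matrix.toEuclideanCLM (𝕜 := ℝ) B) x‖ ^ 2 = (B *ᵥ v) ⬝ᵥ (B *ᵥ v) := by
    rw [hnorm, hCLM]
  have h2 : ‖x‖ ^ 2 = v ⬝ᵥ v := hnorm x
  have h3 : (B *ᵥ v) ⬝ᵥ (B *ᵥ v) ≤ c * c * (v ⬝ᵥ v) := by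
    have hw : B *ᵥ v = R *ᵥ (R *ᵥ v) := by rw [Matrix.mulVec_mulVec, hRR]
    calc (B *ᵥ v) ⬝ᵥ (B *ᵥ v) = (R *ᵥ (R *ᵥ v)) ⬝ᵥ (R *ᵥ (R *ᵥ v)) := by rw [hw]
    _ = (R *ᵥ v) ⬝ᵥ B *ᵥ (R *ᵥ v) := key _
    _ ≤ c * ((R *ᵥ v) ⬝ᵥ (R *ᵥ v)) := hq _
    _ = c * (v ⬝ᵥ B *ᵥ v) := by rw [key v]
    _ ≤ c * (c * (v ⬝ᵥ v)) := mul_le_mul_of_nonneg_left (hq v) hc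
    _ = c * c * (v ⬝ᵥ v) := by ring
  nlinarith [norm_nonneg ((Matrix.toEuclideanCLM (𝕜 := ℝ) B) x), norm_nonneg x,
    mul_nonneg hc (norm_nonneg x), h1, h2, h3,
    sq_nonneg (‖(Matrix.toEuclideanCLM (𝕜 := ℝ) B) x‖ - c * ‖x‖),
    sq_nonneg (‖(Matrix.toEuclideanCLM (𝕜 := ℝ) B) x‖ + c * ‖x‖)]
theorem stmt14 {p : ℕ} (SigTilde Sig Sighat : Matrix (Fin p) (Fin p) ℝ)
    (hSigTilde : SigTilde.PosSemidef) (hSig : Sig.PosSemidef)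
    (lam : ℝ) (hlam0 : 0 < lam) (hlam : 2 * opN (SigTilde - Sig) ≤ lam)
    (hhat : Sighat.PosSemidef)
    (hmin : ∀ S : Matrix (Fin p) (Fin p) ℝ, S.PosSemidef →
      frobSq (SigTilde - Sighat) + lam * nucN Sighat ≤ frobSq (SigTilde - S) + lam * nucN S) :
    opN (Sighat - Sig) ≤ lam := by
  set D := SigTilde - Sighat with hD
  have hDt : Dᵀ = D := by
    rw [hD, transpose_sub, (real_psd_iff.mp hSigTilde).1, (real_psd_iff.mp hhat).1]
  -- first-order condition in increasing directions
  have hkey : ∀ X : Matrix (Fin p) (Fin p) ℝ, X.PosSemidef →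
      0 ≤ lam * X.trace - 2 * (Dᵀ * X).trace := by
    intro X hX
    apply nonneg_of_forall_quad (frobSq_nonneg X)
    intro t ht _
    have hS : (Sighat + t • X).PosSemidef := hhat.add (psd_smul hX ht.le)
    have h1 := hmin _ hS
    rw [nucN_psd hhat, nucN_psd hS] at h1
    have h2 : SigTilde - (Sighat + t • X) = D - t • X := by
      rw [hD]; abel
    rw [h2, frob_expand, Matrix.trace_add, Matrix.trace_smul, smul_eq_mul] at h1
    nlinarith [h1]
  -- first-order condition in the shrinking direction
  have hkey2 : 0 ≤ 2 * (Dᵀ * Sighat).trace - lam * Sighat.trace := by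
    apply nonneg_of_forall_quad (frobSq_nonneg Sighat)
    intro t ht ht1
    have hS : ((1 - t) • Sighat).PosSemidef := psd_smul hhat (by linarith)
    have h1 := hmin _ hS
    rw [nucN_psd hhat, nucN_psd hS] at h1
    have h2 : SigTilde - (1 - t) • Sighat = D - (-t) • Sighat := by
      rw [hD, sub_smul, one_smul, neg_smul]; abel
    rw [h2, frob_expand, Matrix.trace_smul, smul_eq_mul] at h1
    nlinarith [h1]
  -- the matrix lam•1 - 2•D is PSD
  set M : Matrix (Fin p) (Fin p) ℝ := lam • (1 : Matrix (Fin p) (Fin p) ℝ) - (2:ℝ) • D with hM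
  have hMquad : ∀ x : Fin p → ℝ, x ⬝ᵥ M *ᵥ x = lam * (x ⬝ᵥ x) - 2 * (x ⬝ᵥ D *ᵥ x) := by
    intro x
    rw [hM, Matrix.sub_mulVec, dotProduct_sub, smul_mulVec, smul_mulVec,
      Matrix.one_mulVec, dotProduct_smul, dotProduct_smul, smul_eq_mul, smul_eq_mul]
  have hMpsd : M.PosSemidef := by
    rw [real_psd_iff]
    constructor
    · rw [hM, transpose_sub, transpose_smul, transpose_smul, transpose_one, hDt]
    · intro x
      have h1 := hkey _ (psd_vecMulVec x)
      rw [_root_.trace_vecMulVec, trace_transpose_mul_vecMulVec] at h1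
      rw [hMquad]; linarith
  -- trace (M * Sighat) = 0
  have htr0 : (M * Sighat).trace = 0 := by
    have h1 := hkey _ hhat
    have h2 : (M * Sighat).trace = lam * Sighat.trace - 2 * (Dᵀ * Sighat).trace := by
      rw [hM, hDt, Matrix.sub_mul, Matrix.smul_mul, Matrix.smul_mul, Matrix.one_mul,
        Matrix.trace_sub, Matrix.trace_smul, Matrix.trace_smul, smul_eq_mul, smul_eq_mul]
    rw [h2]; linarith [hkey2]
  -- hence M * Sighat = 0
  have hMS : M * Sighat = 0 := by
    set R := hMpsd.sqrt with hR
    set T := hhat.sqrt with hT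
    have hRt : Rᵀ = R := by
      rw [← conjTranspose_eq_transpose_of_trivial]; exact hMpsd.posSemidef_sqrt.1
    have hTt : Tᵀ = T := by
      rw [← conjTranspose_eq_transpose_of_trivial]; exact hhat.posSemidef_sqrt.1
    have hRR : R * R = M := hMpsd.sqrt_mul_self
    have hTT : T * T = Sighat := hhat.sqrt_mul_self
    have h1 : (M * Sighat).trace = frobSq (R * T) := by
      rw [frobSq, Matrix.transpose_mul, hRt, hTt, ← hRR, ← hTT]
      rw [show (T * R) * (R * T) = T * (R * (R * T)) by simp only [Matrix.mul_assoc],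
        Matrix.trace_mul_comm T (R * (R * T))]
      simp only [Matrix.mul_assoc]
    have h2 : R * T = 0 := frobSq_eq_zero (by rw [← h1, htr0])
    calc M * Sighat = R * ((R * T) * T) := by
          rw [← hRR, ← hTT]; simp only [Matrix.mul_assoc]
    _ = 0 := by rw [h2, Matrix.zero_mul, Matrix.mul_zero]
  -- D * Sighat = (lam/2) • Sighat
  have hDS : D * Sighat = (lam / 2) • Sighat := by
    have h1 : M * Sighat = lam • Sighat - (2:ℝ) • (D * Sighat) := by
      conv_lhs => rw [hM, Matrix.sub_mul, Matrix.smul_mul, Matrix.smul_mul, Matrix.one_mul]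
    rw [hMS] at h1
    have h2 : (2:ℝ) • (D * Sighat) = lam • Sighat := (sub_eq_zero.mp h1.symm).symm
    calc D * Sighat = (1/2 : ℝ) • ((2:ℝ) • (D * Sighat)) := by
          rw [smul_smul]; norm_num
    _ = (1/2 : ℝ) • (lam • Sighat) := by rw [h2]
    _ = (lam / 2) • Sighat := by rw [smul_smul]; ring_nf
  -- D = SigTilde - Sighat is PSD
  have hDpsd : D.PosSemidef := by
    rw [real_psd_iff]
    refine ⟨hDt, fun v => ?_⟩
    -- invertible matrix C = Sighat + lam • 1
    set C : Matrix (Fin p) (Fin p) ℝ := Sighat + lam • (1 : Matrix (Fin p) (Fin p) ℝ) with hC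
    have hCpd : C.PosDef := by
      refine Matrix.PosDef.posSemidef_add hhat ?_
      rw [posDef_iff_dotProduct_mulVec]
      constructor
      · rw [IsHermitian, conjTranspose_eq_transpose_of_trivial, transpose_smul, transpose_one]
      · intro x hx
        have h1 : star x = x := by simp
        rw [smul_mulVec, Matrix.one_mulVec, dotProduct_smul, h1, smul_eq_mul]
        have h2 : 0 < x ⬝ᵥ x := by
          rcases lt_or_eq_of_le (by simpa [h1] using dotProduct_star_self_nonneg x) with h | h
          · exact h
          · exact absurd (by simpa [h1] using dotProduct_star_self_eq_zero.mp h.symm) hx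
        exact mul_pos hlam0 h2
    have hdet : IsUnit C.det := hCpd.det_pos.ne'.isUnit
    set u : Fin p → ℝ := C⁻¹ *ᵥ v with hu
    have hv : Sighat *ᵥ u + lam • u = v := by
      have h1 : C *ᵥ u = v := by
        rw [hu, Matrix.mulVec_mulVec, Matrix.mul_nonsing_inv _ hdet, Matrix.one_mulVec]
      conv_rhs => rw [← h1, hC, Matrix.add_mulVec, smul_mulVec, Matrix.one_mulVec]
    set v1 : Fin p → ℝ := Sighat *ᵥ u with hv1
    set v2 : Fin p → ℝ := lam • u with hv2
    have hBv1 : D *ᵥ v1 = (lam / 2) • v1 := by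
      rw [hv1, Matrix.mulVec_mulVec, hDS, smul_mulVec]
    have hSv2 : Sighat *ᵥ v2 = lam • v1 := by
      rw [hv2, Matrix.mulVec_smul, hv1]
    have h12 : 0 ≤ v1 ⬝ᵥ v2 := by
      rw [hv1, hv2, dotProduct_smul, smul_eq_mul]
      have := (real_psd_iff.mp hhat).2 u
      have hcomm : (Sighat *ᵥ u) ⬝ᵥ u = u ⬝ᵥ Sighat *ᵥ u :=
        (sym_dot (real_psd_iff.mp hhat).1 u u).symm
      exact mul_nonneg hlam0.le (by rw [hcomm]; exact this)
    have hself : 0 ≤ v1 ⬝ᵥ v1 := by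
      simpa using dotProduct_star_self_nonneg v1
    have hquadT : 0 ≤ v2 ⬝ᵥ SigTilde *ᵥ v2 := (real_psd_iff.mp hSigTilde).2 v2
    -- expand v ⬝ᵥ D *ᵥ v
    have hexp : v ⬝ᵥ D *ᵥ v = lam / 2 * (v1 ⬝ᵥ v1) + (v2 ⬝ᵥ SigTilde *ᵥ v2) := by
      have e1 : v1 ⬝ᵥ D *ᵥ v1 = lam / 2 * (v1 ⬝ᵥ v1) := by
        rw [hBv1, dotProduct_smul, smul_eq_mul]
      have e2 : v2 ⬝ᵥ D *ᵥ v1 = lam / 2 * (v2 ⬝ᵥ v1) := by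
        rw [hBv1, dotProduct_smul, smul_eq_mul]
      have e3 : v1 ⬝ᵥ D *ᵥ v2 = lam / 2 * (v1 ⬝ᵥ v2) := by
        rw [sym_dot hDt, hBv1, smul_dotProduct, smul_eq_mul]
      have e4 : v2 ⬝ᵥ D *ᵥ v2 = v2 ⬝ᵥ SigTilde *ᵥ v2 - lam * (v2 ⬝ᵥ v1) := by
        rw [hD, Matrix.sub_mulVec, dotProduct_sub, hSv2, dotProduct_smul, smul_eq_mul]
      have e5 : v2 ⬝ᵥ v1 = v1 ⬝ᵥ v2 := dotProduct_comm _ _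
      calc v ⬝ᵥ D *ᵥ v = (v1 + v2) ⬝ᵥ D *ᵥ (v1 + v2) := by rw [hv]
      _ = v1 ⬝ᵥ D *ᵥ v1 + v1 ⬝ᵥ D *ᵥ v2 + (v2 ⬝ᵥ D *ᵥ v1 + v2 ⬝ᵥ D *ᵥ v2) := by
          rw [Matrix.mulVec_add, dotProduct_add, add_dotProduct, add_dotProduct]; ring
      _ = lam / 2 * (v1 ⬝ᵥ v1) + (v2 ⬝ᵥ SigTilde *ᵥ v2) := by
          rw [e1, e2, e3, e4, e5]; ring
    rw [hexp]
    have : 0 ≤ lam / 2 * (v1 ⬝ᵥ v1) := mul_nonneg (by linarith) hself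
    linarith
  -- assemble
  have hhalf : (0:ℝ) ≤ lam / 2 := by linarith
  have hD2 : ((lam / 2) • (1 : Matrix (Fin p) (Fin p) ℝ) - D).PosSemidef := by
    have h1 : (lam / 2 : ℝ) • (1 : Matrix (Fin p) (Fin p) ℝ) - D = (2⁻¹ : ℝ) • M := by
      rw [hM, smul_sub, smul_smul, smul_smul]
      norm_num
      congr 1
      ring
    rw [h1]
    exact psd_smul hMpsd (by norm_num)
  have hb1 : opN D ≤ lam / 2 := opN_le_of_psd hhalf hDpsd hD2
  have hb2 : opN (Sighat - SigTilde) = opN D := by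
    rw [opN, opN, show Sighat - SigTilde = -D by rw [hD]; abel, map_neg, norm_neg]
  have htri : opN (Sighat - Sig) ≤ opN (Sighat - SigTilde) + opN (SigTilde - Sig) := by
    rw [opN, opN, opN, show Sighat - Sig = (Sighat - SigTilde) + (SigTilde - Sig) by abel,
      map_add]
    exact norm_add_le _ _
  linarith
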